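/- Let d ≥ 1, n ≥ 1, let μ be a positive measure on ℝ^d, and let p_{n-1}, p_n, p_{n+1} be families of μ-square-integrable functions ℝ^d → ℝ of sizes r_{n-1}, r_n, r_{n+1} that are jointly orthonormal: ∫ p_m(x) p_k(x)^T dμ(x) = δ_{m,k} I for m,k ∈ {n-1,n,n+1}. Fix i, j ∈ {1,…,d} and suppose the pointwise three-term relations x_l p_n(x) = B_{n+1,l} p_{n+1}(x) + A_{n+1,l} p_n(x) + B_{n,l}^T p_{n-1}(x) hold for all x ∈ ℝ^d and l ∈ {i,j}. Define p̃_{n+1,l}(x) := x_l p_n(x) − A_{n+1,l} p_n(x) − B_{n,l}^T p_{n-1}(x) for l ∈ {i,j} and T_{n,i,j} := ∫ p̃_{n+1,i}(x) p̃_{n+1,j}(x)^T dμ(x). Then T_{n,i,j} = B_{n+1,i} B_{n+1,j}^T. -/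

import Mathlib

open MeasureTheory Matrix


lemma l2_mul_integrable {α : Type*} [MeasurableSpace α] {μ : Measure α} {f g : α → ℝ}
    (hf : MemLp f 2 μ) (hg : MemLp g 2 μ) :
    Integrable (fun x => f x * g x) μ := by
  have h1 : Integrable (fun x => (f x + g x) ^ 2) μ := (hf.add hg).integrable_sq
  have h2 : Integrable (fun x => f x ^ 2) μ := hf.integrable_sq
  have h3 : Integrable (fun x => g x ^ 2) μ := hg.integrable_sq
  have : Integrable (fun x => (((f x + g x) ^ 2 - f x ^ 2) - g x ^ 2) / 2) μ :=
    ((h1.sub h2).sub h3).div_const 2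
  convert this using 2 with x
  ring

/-- mixed-moment identity of Section 5.2.3 of the paper: the mixed Stieltjes
moment matrix `T_{n,i,j} = ∫ p̃_{n+1,i} p̃_{n+1,j}ᵀ dμ` of the modified families
`p̃_{n+1,l} = x_l p_n − A_{n+1,l} p_n − B_{n,l}ᵀ p_{n-1}` equals `B_{n+1,i} B_{n+1,j}ᵀ`. -/
theorem stieltjes_mixed_moment
    (d n : ℕ) (hd : 1 ≤ d) (hn : 1 ≤ n)
    (rnm1 rn rnp1 : ℕ) (hrnm1 : 0 < rnm1) (hrn : 0 < rn) (hrnp1 : 0 < rnp1)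
    (μ : Measure (Fin d → ℝ))
    (pnm1 : Fin rnm1 → (Fin d → ℝ) → ℝ)
    (pn : Fin rn → (Fin d → ℝ) → ℝ)
    (pnp1 : Fin rnp1 → (Fin d → ℝ) → ℝ)
    (hL2nm1 : ∀ a, MemLp (pnm1 a) 2 μ)
    (hL2n : ∀ a, MemLp (pn a) 2 μ)
    (hL2np1 : ∀ a, MemLp (pnp1 a) 2 μ)
    (horth_nm1 : ∀ a b, ∫ x, pnm1 a x * pnm1 b x ∂μ = if a = b then (1 : ℝ) else 0)
    (horth_n : ∀ a b, ∫ x, pn a x * pn b x ∂μ = if a = b then (1 : ℝ) else 0)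
    (horth_np1 : ∀ a b, ∫ x, pnp1 a x * pnp1 b x ∂μ = if a = b then (1 : ℝ) else 0)
    (horth_nm1_n : ∀ a b, ∫ x, pnm1 a x * pn b x ∂μ = 0)
    (horth_nm1_np1 : ∀ a b, ∫ x, pnm1 a x * pnp1 b x ∂μ = 0)
    (horth_n_np1 : ∀ a b, ∫ x, pn a x * pnp1 b x ∂μ = 0)
    (i j : Fin d)
    (A : Fin d → Matrix (Fin rn) (Fin rn) ℝ)
    (B : Fin d → Matrix (Fin rn) (Fin rnp1) ℝ)
    (Bn : Fin d → Matrix (Fin rnm1) (Fin rn) ℝ)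
    (httr : ∀ l ∈ ({i, j} : Set (Fin d)), ∀ (x : Fin d → ℝ) (k : Fin rn),
      x l * pn k x =
        (∑ q, B l k q * pnp1 q x) + (∑ a, A l k a * pn a x) +
          (∑ a, Bn l a k * pnm1 a x))
    (ptilde : Fin d → Fin rn → (Fin d → ℝ) → ℝ)
    (hptilde : ∀ l ∈ ({i, j} : Set (Fin d)), ∀ (k : Fin rn) (x : Fin d → ℝ),
      ptilde l k x =
        x l * pn k x - (∑ a, A l k a * pn a x) - (∑ a, Bn l a k * pnm1 a x))
    (T : Matrix (Fin rn) (Fin rn) ℝ)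
    (hT : ∀ k l, T k l = ∫ x, ptilde i k x * ptilde j l x ∂μ) :
    T = B i * (B j)ᵀ := by
  have key : ∀ l ∈ ({i, j} : Set (Fin d)), ∀ (k : Fin rn) (x : Fin d → ℝ),
      ptilde l k x = ∑ q, B l k q * pnp1 q x := by
    intro l hl k x
    rw [hptilde l hl k x, httr l hl x k]; ring
  ext k l
  rw [hT, Matrix.mul_apply]
  have hexp : ∀ x, ptilde i k x * ptilde j l x =
      ∑ q, ∑ q', (B i k q * B j l q') * (pnp1 q x * pnp1 q' x) := by
    intro x
    rw [key i (by simp) k x, key j (by simp) l x, Finset.sum_mul_sum]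
    exact Finset.sum_congr rfl fun q _ => Finset.sum_congr rfl fun q' _ => by ring
  have hint : ∀ (q q' : Fin rnp1),
      Integrable (fun x => (B i k q * B j l q') * (pnp1 q x * pnp1 q' x)) μ :=
    fun q q' => (l2_mul_integrable (hL2np1 q) (hL2np1 q')).const_mul _
  simp_rw [hexp]
  rw [integral_finset_sum _ (fun q _ => integrable_finset_sum _ fun q' _ => hint q q')]
  have : ∀ q : Fin rnp1,
      ∫ x, ∑ q', (B i k q * B j l q') * (pnp1 q x * pnp1 q' x) ∂μ = B i k q * B j l q := by
    intro q
    rw [integral_finset_sum _ fun q' _ => hint q q']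
    have : ∀ q' : Fin rnp1, ∫ x, (B i k q * B j l q') * (pnp1 q x * pnp1 q' x) ∂μ =
        (B i k q * B j l q') * (if q = q' then (1 : ℝ) else 0) := by
      intro q'
      rw [MeasureTheory.integral_const_mul, horth_np1]
    simp_rw [this]
    simp [Finset.sum_ite_eq, mul_ite]
  simp_rw [this]
  simp [Matrix.transpose_apply]
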